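/- Fix an integer $d \geq 2$, let $\omega = e^{2\pi i/d}$ and $a_l = \tfrac{1}{\sqrt{2}}\, e^{i\pi(2l-d)/(4d)}$ for $l = 1, \dots, d-1$. Let $H_A$ and $H_B$ be finite-dimensional complex Hilbert spaces, let $A_1, A_2$ be unitary operators on $H_A$ and $B_1, B_2$ unitary operators on $H_B$ with $A_x^d = I$ and $B_y^d = I$, and let $\psi \in H_A \otimes H_B$ be a unit vector. Define $\tilde{I}_d := \sum_{l=1}^{d-1} \big[ a_l \langle \psi, (A_1^l \otimes B_1^{d-l})\psi \rangle + \overline{a_l}\, \omega^l \langle \psi, (A_1^l \otimes B_2^{d-l})\psi \rangle + a_l \langle \psi, (A_2^l \otimes B_2^{d-l})\psi \rangle + \overline{a_l} \langle \psi, (A_2^l \otimes B_1^{d-l})\psi \rangle \big]$. Then $\tilde{I}_d$ is real and $\tilde{I}_d \leq 2(d-1)$ (the Tsirelson bound of the SATWAP inequality). -/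

import Mathlib

open Kronecker Matrix

namespace SatwapAux


/-- conj transpose of a Kronecker product. -/
lemma kron_conjT {n m : ℕ} (P : Matrix (Fin n) (Fin n) ℂ) (Q : Matrix (Fin m) (Fin m) ℂ) :
    (P ⊗ₖ Q)ᴴ = Pᴴ ⊗ₖ Qᴴ := by
  ext ⟨i, j⟩ ⟨k, l⟩
  simp [conjTranspose_apply, kroneckerMap_apply]

lemma adj_dot {k : Type*} [Fintype k] (ψ : k → ℂ) (M N : Matrix k k ℂ) :
    star (M *ᵥ ψ) ⬝ᵥ (N *ᵥ ψ) = star ψ ⬝ᵥ ((Mᴴ * N) *ᵥ ψ) := by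
  rw [star_mulVec, ← Matrix.dotProduct_mulVec, mulVec_mulVec]

lemma conj_dot {k : Type*} [Fintype k] (ψ : k → ℂ) (M : Matrix k k ℂ) :
    (starRingEnd ℂ) (star ψ ⬝ᵥ (M *ᵥ ψ)) = star ψ ⬝ᵥ (Mᴴ *ᵥ ψ) := by
  calc (starRingEnd ℂ) (star ψ ⬝ᵥ (M *ᵥ ψ))
      = star (star ψ ⬝ᵥ (M *ᵥ ψ)) := rfl
    _ = star (star (star (M *ᵥ ψ) ⬝ᵥ ψ)) := by rw [star_dotProduct]
    _ = star (M *ᵥ ψ) ⬝ᵥ ψ := star_star _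
    _ = (star ψ ᵥ* Mᴴ) ⬝ᵥ ψ := by rw [star_mulVec]
    _ = star ψ ⬝ᵥ (Mᴴ *ᵥ ψ) := by rw [Matrix.dotProduct_mulVec]

lemma pow_mul_conjT {k : ℕ} (A : Matrix (Fin k) (Fin k) ℂ)
    (hA : A ∈ Matrix.unitaryGroup (Fin k) ℂ) (l : ℕ) :
    A ^ l * (A ^ l)ᴴ = 1 := by
  have h : A ^ l ∈ Matrix.unitaryGroup (Fin k) ℂ := pow_mem hA l
  have := (Unitary.mem_iff.mp h).2
  rwa [star_eq_conjTranspose] at this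

lemma conjT_mul_pow {k : ℕ} (A : Matrix (Fin k) (Fin k) ℂ)
    (hA : A ∈ Matrix.unitaryGroup (Fin k) ℂ) (l : ℕ) :
    (A ^ l)ᴴ * A ^ l = 1 := by
  have h : A ^ l ∈ Matrix.unitaryGroup (Fin k) ℂ := pow_mem hA l
  have := (Unitary.mem_iff.mp h).1
  rwa [star_eq_conjTranspose] at this

lemma pow_conjT_eq {k d : ℕ} (A : Matrix (Fin k) (Fin k) ℂ)
    (hA : A ∈ Matrix.unitaryGroup (Fin k) ℂ) (hAd : A ^ d = 1) {l : ℕ} (hl : l ≤ d) :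
    (A ^ l)ᴴ = A ^ (d - l) := by
  calc (A ^ l)ᴴ = (A ^ l)ᴴ * (A ^ l * A ^ (d - l)) := by
        rw [← pow_add, Nat.add_sub_cancel' hl, hAd, mul_one]
    _ = A ^ (d - l) := by rw [← mul_assoc, conjT_mul_pow A hA, one_mul]





noncomputable def ωc (d : ℕ) : ℂ := Complex.exp (2 * (Real.pi : ℂ) * Complex.I / d)

noncomputable def ac (d l : ℕ) : ℂ := (1 / (Real.sqrt 2 : ℂ)) *
  Complex.exp (Complex.I * (Real.pi : ℂ) * (2 * (l : ℂ) - (d : ℂ)) / (4 * d))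

lemma conj_ac (d l : ℕ) : (starRingEnd ℂ) (ac d l) =
    (1 / (Real.sqrt 2 : ℂ)) *
      Complex.exp (-(Complex.I * (Real.pi : ℂ) * (2 * (l : ℂ) - (d : ℂ)) / (4 * d))) := by
  unfold ac
  rw [_root_.map_mul, ← Complex.exp_conj]
  congr 1
  · simp
  · simp [map_div₀, _root_.map_mul, map_sub, Complex.conj_I, Complex.conj_ofReal, map_ofNat]
    ring_nf

lemma sqrt2_mul_self : ((Real.sqrt 2 : ℝ) : ℂ) * ((Real.sqrt 2 : ℝ) : ℂ) = 2 := by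
  rw [← Complex.ofReal_mul, Real.mul_self_sqrt (by norm_num)]
  norm_num

lemma sqrt2_ne : ((Real.sqrt 2 : ℝ) : ℂ) ≠ 0 := by
  simp [Real.sqrt_eq_zero']

lemma ac_mul_conj (d l : ℕ) : ac d l * (starRingEnd ℂ) (ac d l) = 1 / 2 := by
  rw [conj_ac]
  unfold ac
  rw [mul_mul_mul_comm, ← Complex.exp_add, add_neg_cancel, Complex.exp_zero, mul_one,
    div_mul_div_comm, one_mul, sqrt2_mul_self]

lemma conj_ωc_pow (d l : ℕ) (hd : (d : ℂ) ≠ 0) (hl : l ≤ d) :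
    (starRingEnd ℂ) (ωc d ^ l) = ωc d ^ (d - l) := by
  unfold ωc
  rw [map_pow, ← Complex.exp_conj, ← Complex.exp_nat_mul, ← Complex.exp_nat_mul]
  have hcast : ((d - l : ℕ) : ℂ) = (d : ℂ) - (l : ℂ) := by
    push_cast [hl]; ring
  rw [hcast]
  have : ((d : ℂ) - l) * (2 * (Real.pi : ℂ) * Complex.I / d) =
      2 * (Real.pi : ℂ) * Complex.I + (l : ℂ) * ((starRingEnd ℂ) (2 * (Real.pi : ℂ) * Complex.I / d)) := by
    simp only [map_div₀, _root_.map_mul, Complex.conj_I, Complex.conj_ofReal, map_ofNat, map_natCast]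
    field_simp
    ring
  rw [this, Complex.exp_add, Complex.exp_two_pi_mul_I, one_mul]

lemma ωc_pow_mul_conj (d l : ℕ) : ωc d ^ l * (starRingEnd ℂ) (ωc d ^ l) = 1 := by
  unfold ωc
  rw [map_pow, ← Complex.exp_conj, ← Complex.exp_nat_mul, ← Complex.exp_nat_mul,
    ← Complex.exp_add]
  have : (l : ℂ) * (2 * (Real.pi : ℂ) * Complex.I / d) +
      (l : ℂ) * ((starRingEnd ℂ) (2 * (Real.pi : ℂ) * Complex.I / d)) = 0 := by
    simp only [map_div₀, _root_.map_mul, Complex.conj_I, Complex.conj_ofReal, map_ofNat, map_natCast]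
    ring
  rw [this, Complex.exp_zero]

lemma key_scalar (d l : ℕ) (hd : (d : ℂ) ≠ 0) :
    ac d l * ac d l + (starRingEnd ℂ) (ac d l) * (starRingEnd ℂ) (ac d l) * ωc d ^ l = 0 := by
  rw [conj_ac]
  unfold ac ωc
  rw [← Complex.exp_nat_mul]
  set z : ℂ := Complex.I * (Real.pi : ℂ) * (2 * (l : ℂ) - (d : ℂ)) / (4 * d) with hz
  have h1 : (1 / (Real.sqrt 2 : ℂ) * Complex.exp z) * (1 / (Real.sqrt 2 : ℂ) * Complex.exp z)
      = (1 / 2) * Complex.exp (z + z) := by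
    rw [Complex.exp_add, mul_mul_mul_comm, div_mul_div_comm, one_mul, sqrt2_mul_self]
  have h2 : (1 / (Real.sqrt 2 : ℂ) * Complex.exp (-z)) * (1 / (Real.sqrt 2 : ℂ) * Complex.exp (-z))
      * Complex.exp ((l : ℂ) * (2 * (Real.pi : ℂ) * Complex.I / d))
      = (1 / 2) * Complex.exp (-z + -z + (l : ℂ) * (2 * (Real.pi : ℂ) * Complex.I / d)) := by
    rw [Complex.exp_add, Complex.exp_add, mul_mul_mul_comm, div_mul_div_comm, one_mul,
      sqrt2_mul_self, mul_assoc]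
  rw [h1, h2]
  have h3 : -z + -z + (l : ℂ) * (2 * (Real.pi : ℂ) * Complex.I / d)
      = (z + z) + (Real.pi : ℂ) * Complex.I := by
    rw [hz]; field_simp; ring
  rw [h3, Complex.exp_add (z + z), Complex.exp_pi_mul_I]
  ring

lemma conj_ac_eq (d l : ℕ) (hl : l ≤ d) : (starRingEnd ℂ) (ac d l) = ac d (d - l) := by
  rw [conj_ac]
  unfold ac
  congr 2
  have hcast : ((d - l : ℕ) : ℂ) = (d : ℂ) - (l : ℂ) := by push_cast [hl]; ring
  rw [hcast]
  ring



lemma key_op {k : ℕ} (a w : ℂ) (X Y : Matrix (Fin k) (Fin k) ℂ)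
    (hX : X * Xᴴ = 1) (hY : Y * Yᴴ = 1)
    (hw : w * (starRingEnd ℂ) w = 1)
    (h2 : a * (starRingEnd ℂ) a = 1 / 2)
    (h0 : a * a + (starRingEnd ℂ) a * (starRingEnd ℂ) a * w = 0) :
    (a • X + (starRingEnd ℂ) a • Y) * (a • X + (starRingEnd ℂ) a • Y)ᴴ +
      (((starRingEnd ℂ) a * w) • X + a • Y) * (((starRingEnd ℂ) a * w) • X + a • Y)ᴴ
      = (2 : ℂ) • 1 := by
  have h0' : (starRingEnd ℂ) a * (starRingEnd ℂ) a + a * a * (starRingEnd ℂ) w = 0 := by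
    have := congrArg (starRingEnd ℂ) h0
    simpa [map_add, _root_.map_mul, Complex.conj_conj] using this
  simp only [conjTranspose_add, conjTranspose_smul, conjTranspose_mul, add_mul, mul_add,
    smul_mul_assoc, mul_smul_comm, smul_smul, hX, hY, RCLike.star_def, _root_.map_mul,
    Complex.conj_conj]
  match_scalars
  · linear_combination (4 : ℂ) * h2 + (a * (starRingEnd ℂ) a) * hw
  · linear_combination h0'
  · linear_combination h0

lemma inner_eq_dot {ι : Type*} [Fintype ι] (v w : ι → ℂ) :
    (inner ℂ ((WithLp.equiv 2 (ι → ℂ)).symm v) ((WithLp.equiv 2 (ι → ℂ)).symm w) : ℂ)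
      = star v ⬝ᵥ w := by
  simp [PiLp.inner_apply, PiLp.toLp_apply, RCLike.inner_apply, dotProduct, mul_comm]

/-- The key per-pair Cauchy-Schwarz bound. -/
lemma pair_bound {n m : ℕ} (C D : Matrix (Fin n) (Fin n) ℂ) (U V : Matrix (Fin m) (Fin m) ℂ)
    (hU : Uᴴ * U = 1) (hV : Vᴴ * V = 1)
    (hCD : C * Cᴴ + D * Dᴴ = (2 : ℂ) • 1)
    (ψ : Fin n × Fin m → ℂ) (hψ : star ψ ⬝ᵥ ψ = 1) :
    (star ψ ⬝ᵥ ((C ⊗ₖ U) *ᵥ ψ) + star ψ ⬝ᵥ ((D ⊗ₖ V) *ᵥ ψ)).re ≤ 2 := by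
  classical
  set E := EuclideanSpace ℂ (Fin n × Fin m)
  let e := (WithLp.equiv 2 (Fin n × Fin m → ℂ)).symm
  -- split ⟨ψ, (C ⊗ U) ψ⟩ = ⟪(Cᴴ⊗1)ψ, (1⊗U)ψ⟫
  have split : ∀ (P : Matrix (Fin n) (Fin n) ℂ) (Q : Matrix (Fin m) (Fin m) ℂ),
      star ψ ⬝ᵥ ((P ⊗ₖ Q) *ᵥ ψ)
        = (inner ℂ (e ((Pᴴ ⊗ₖ 1) *ᵥ ψ)) (e ((1 ⊗ₖ Q) *ᵥ ψ)) : ℂ) := by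
    intro P Q
    rw [inner_eq_dot, adj_dot, kron_conjT, conjTranspose_conjTranspose, conjTranspose_one,
      ← Matrix.mul_kronecker_mul, Matrix.mul_one, Matrix.one_mul]
  -- norms of the B-side vectors are 1
  have normB : ∀ (Q : Matrix (Fin m) (Fin m) ℂ), Qᴴ * Q = 1 → ‖e ((1 ⊗ₖ Q) *ᵥ ψ)‖ = 1 := by
    intro Q hQ
    have h1 : (inner ℂ (e ((1 ⊗ₖ Q) *ᵥ ψ)) (e ((1 ⊗ₖ Q) *ᵥ ψ)) : ℂ) = 1 := by
      rw [inner_eq_dot, adj_dot, kron_conjT, conjTranspose_one,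
        ← Matrix.mul_kronecker_mul, Matrix.one_mul, hQ, Matrix.one_kronecker_one,
        Matrix.one_mulVec, hψ]
    have := norm_sq_eq_re_inner (𝕜 := ℂ) (e ((1 ⊗ₖ Q) *ᵥ ψ))
    rw [h1] at this
    simp only [RCLike.re_to_complex, Complex.one_re] at this
    nlinarith [norm_nonneg (e ((1 ⊗ₖ Q) *ᵥ ψ))]
  -- norms of the A-side vectors
  have normA : ∀ (P : Matrix (Fin n) (Fin n) ℂ),
      (‖e ((Pᴴ ⊗ₖ 1) *ᵥ ψ)‖ : ℝ) ^ 2 = (star ψ ⬝ᵥ (((P * Pᴴ) ⊗ₖ 1) *ᵥ ψ)).re := by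
    intro P
    rw [norm_sq_eq_re_inner (𝕜 := ℂ), inner_eq_dot, adj_dot, kron_conjT,
      conjTranspose_conjTranspose, conjTranspose_one, ← Matrix.mul_kronecker_mul,
      Matrix.mul_one]
    rfl
  set x := ‖e ((Cᴴ ⊗ₖ 1) *ᵥ ψ)‖ with hx
  set y := ‖e ((Dᴴ ⊗ₖ 1) *ᵥ ψ)‖ with hy
  have hsum : x ^ 2 + y ^ 2 = 2 := by
    rw [hx, hy, normA C, normA D, ← Complex.add_re]
    have : star ψ ⬝ᵥ (((C * Cᴴ) ⊗ₖ 1) *ᵥ ψ) + star ψ ⬝ᵥ (((D * Dᴴ) ⊗ₖ 1) *ᵥ ψ)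
        = (2 : ℂ) * (star ψ ⬝ᵥ ψ) := by
      rw [← dotProduct_add, ← Matrix.add_mulVec, ← Matrix.add_kronecker, hCD,
        Matrix.smul_kronecker, Matrix.one_kronecker_one, Matrix.smul_mulVec,
        Matrix.one_mulVec, dotProduct_smul, smul_eq_mul]
    rw [this, hψ, mul_one]
    norm_num
  have hb1 : (star ψ ⬝ᵥ ((C ⊗ₖ U) *ᵥ ψ)).re ≤ x := by
    rw [split C U]
    calc (inner ℂ (e ((Cᴴ ⊗ₖ 1) *ᵥ ψ)) (e ((1 ⊗ₖ U) *ᵥ ψ)) : ℂ).re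
        ≤ ‖e ((Cᴴ ⊗ₖ 1) *ᵥ ψ)‖ * ‖e ((1 ⊗ₖ U) *ᵥ ψ)‖ := by
          have h := re_inner_le_norm (𝕜 := ℂ) (e ((Cᴴ ⊗ₖ 1) *ᵥ ψ)) (e ((1 ⊗ₖ U) *ᵥ ψ))
          simpa [RCLike.re_to_complex] using h
      _ = x := by rw [normB U hU, mul_one]
  have hb2 : (star ψ ⬝ᵥ ((D ⊗ₖ V) *ᵥ ψ)).re ≤ y := by
    rw [split D V]
    calc (inner ℂ (e ((Dᴴ ⊗ₖ 1) *ᵥ ψ)) (e ((1 ⊗ₖ V) *ᵥ ψ)) : ℂ).re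
        ≤ ‖e ((Dᴴ ⊗ₖ 1) *ᵥ ψ)‖ * ‖e ((1 ⊗ₖ V) *ᵥ ψ)‖ := by
          have h := re_inner_le_norm (𝕜 := ℂ) (e ((Dᴴ ⊗ₖ 1) *ᵥ ψ)) (e ((1 ⊗ₖ V) *ᵥ ψ))
          simpa [RCLike.re_to_complex] using h
      _ = y := by rw [normB V hV, mul_one]
  rw [Complex.add_re]
  have hxn : 0 ≤ x := norm_nonneg _
  have hyn : 0 ≤ y := norm_nonneg _
  nlinarith [sq_nonneg (x - y)]


end SatwapAux

open SatwapAux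

/-- Tsirelson bound of the two-setting SATWAP Bell inequality: for any unitary
observables `A₁, A₂` on a finite-dimensional Hilbert space `ℂⁿ` and `B₁, B₂` on `ℂᵐ`
with `Aₓᵈ = I`, `B_yᵈ = I`, and any unit vector `ψ ∈ ℂⁿ ⊗ ℂᵐ`, the SATWAP expression
`Ĩ_d` is real and satisfies `Ĩ_d ≤ 2(d-1)`. -/
theorem satwap_tsirelson_bound (d n m : ℕ) (hd : 2 ≤ d)
    (A₁ A₂ : Matrix (Fin n) (Fin n) ℂ) (B₁ B₂ : Matrix (Fin m) (Fin m) ℂ)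
    (hA₁ : A₁ ∈ Matrix.unitaryGroup (Fin n) ℂ)
    (hA₂ : A₂ ∈ Matrix.unitaryGroup (Fin n) ℂ)
    (hB₁ : B₁ ∈ Matrix.unitaryGroup (Fin m) ℂ)
    (hB₂ : B₂ ∈ Matrix.unitaryGroup (Fin m) ℂ)
    (hA₁d : A₁ ^ d = 1) (hA₂d : A₂ ^ d = 1) (hB₁d : B₁ ^ d = 1) (hB₂d : B₂ ^ d = 1)
    (ψ : Fin n × Fin m → ℂ) (hψ : ∑ i, ‖ψ i‖ ^ 2 = 1) :
    let ω : ℂ := Complex.exp (2 * (Real.pi : ℂ) * Complex.I / d)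
    let a : ℕ → ℂ := fun l => (1 / (Real.sqrt 2 : ℂ)) *
      Complex.exp (Complex.I * (Real.pi : ℂ) * (2 * (l : ℂ) - (d : ℂ)) / (4 * d))
    let corr : Matrix (Fin n) (Fin n) ℂ → Matrix (Fin m) (Fin m) ℂ → ℂ :=
      fun P Q => star ψ ⬝ᵥ ((P ⊗ₖ Q) *ᵥ ψ)
    let Itilde : ℂ := ∑ l ∈ Finset.Icc 1 (d - 1),
      (a l * corr (A₁ ^ l) (B₁ ^ (d - l)) +
       (starRingEnd ℂ) (a l) * ω ^ l * corr (A₁ ^ l) (B₂ ^ (d - l)) +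
       a l * corr (A₂ ^ l) (B₂ ^ (d - l)) +
       (starRingEnd ℂ) (a l) * corr (A₂ ^ l) (B₁ ^ (d - l)))
    Itilde.im = 0 ∧ Itilde.re ≤ 2 * ((d : ℝ) - 1) := by
  intro ω a corr Itilde
  have hωv : ω = ωc d := rfl
  have hav : ∀ l, a l = ac d l := fun _ => rfl
  have hcv : ∀ P Q, corr P Q = star ψ ⬝ᵥ ((P ⊗ₖ Q) *ᵥ ψ) := fun _ _ => rfl
  have hd0 : (d : ℂ) ≠ 0 := Nat.cast_ne_zero.mpr (by omega)
  have hψ1 : star ψ ⬝ᵥ ψ = 1 := by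
    have : star ψ ⬝ᵥ ψ = ((∑ i, ‖ψ i‖ ^ 2 : ℝ) : ℂ) := by
      rw [dotProduct, Complex.ofReal_sum]
      refine Finset.sum_congr rfl fun i _ => ?_
      rw [Pi.star_apply]
      rw [show (star (ψ i) : ℂ) = (starRingEnd ℂ) (ψ i) from rfl]
      rw [mul_comm, Complex.mul_conj, Complex.normSq_eq_norm_sq, Complex.norm_def]
    rw [this, hψ]; norm_num
  set F : ℕ → ℂ := fun l =>
      a l * corr (A₁ ^ l) (B₁ ^ (d - l)) +
       (starRingEnd ℂ) (a l) * ω ^ l * corr (A₁ ^ l) (B₂ ^ (d - l)) +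
       a l * corr (A₂ ^ l) (B₂ ^ (d - l)) +
       (starRingEnd ℂ) (a l) * corr (A₂ ^ l) (B₁ ^ (d - l)) with hF
  have hIt : Itilde = ∑ l ∈ Finset.Icc 1 (d - 1), F l := rfl
  have hcc : ∀ (P : Matrix (Fin n) (Fin n) ℂ) (Q : Matrix (Fin m) (Fin m) ℂ),
      (starRingEnd ℂ) (corr P Q) = corr Pᴴ Qᴴ := by
    intro P Q
    rw [hcv, hcv, conj_dot, kron_conjT]
  have hac : ∀ l, l ≤ d → (starRingEnd ℂ) (a l) = a (d - l) := by
    intro l hl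
    rw [hav, hav, conj_ac_eq d l hl]
  have hωp : ∀ l, l ≤ d → (starRingEnd ℂ) (ω ^ l) = ω ^ (d - l) := by
    intro l hl
    rw [hωv, conj_ωc_pow d l hd0 hl]
  -- part 1 : the expression is real
  have hconj : (starRingEnd ℂ) Itilde = Itilde := by
    rw [hIt, map_sum]
    refine Finset.sum_nbij' (fun l => d - l) (fun l => d - l) ?_ ?_ ?_ ?_ ?_
    · intro l hl
      simp only [Finset.mem_Icc] at hl ⊢
      omega
    · intro l hl
      simp only [Finset.mem_Icc] at hl ⊢
      omega
    · intro l hl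
      simp only [Finset.mem_Icc] at hl
      show d - (d - l) = l
      omega
    · intro l hl
      simp only [Finset.mem_Icc] at hl
      show d - (d - l) = l
      omega
    · intro l hl
      simp only [Finset.mem_Icc] at hl
      have hld : l ≤ d := by omega
      have hdld : d - l ≤ d := by omega
      have haa : (starRingEnd ℂ) (a (d - l)) = a l := by
        rw [hac (d - l) hdld, show d - (d - l) = l by omega]
      have e1 : (starRingEnd ℂ) (a l * corr (A₁ ^ l) (B₁ ^ (d - l)))
          = a (d - l) * corr (A₁ ^ (d - l)) (B₁ ^ (d - (d - l))) := by
        rw [_root_.map_mul, hcc, hac l hld, pow_conjT_eq A₁ hA₁ hA₁d hld,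
          pow_conjT_eq B₁ hB₁ hB₁d hdld]
      have e2 : (starRingEnd ℂ) ((starRingEnd ℂ) (a l) * ω ^ l * corr (A₁ ^ l) (B₂ ^ (d - l)))
          = (starRingEnd ℂ) (a (d - l)) * ω ^ (d - l) * corr (A₁ ^ (d - l)) (B₂ ^ (d - (d - l))) := by
        rw [_root_.map_mul, _root_.map_mul, hcc, Complex.conj_conj, hωp l hld,
          pow_conjT_eq A₁ hA₁ hA₁d hld, pow_conjT_eq B₂ hB₂ hB₂d hdld, haa]
      have e3 : (starRingEnd ℂ) (a l * corr (A₂ ^ l) (B₂ ^ (d - l)))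
          = a (d - l) * corr (A₂ ^ (d - l)) (B₂ ^ (d - (d - l))) := by
        rw [_root_.map_mul, hcc, hac l hld, pow_conjT_eq A₂ hA₂ hA₂d hld,
          pow_conjT_eq B₂ hB₂ hB₂d hdld]
      have e4 : (starRingEnd ℂ) ((starRingEnd ℂ) (a l) * corr (A₂ ^ l) (B₁ ^ (d - l)))
          = (starRingEnd ℂ) (a (d - l)) * corr (A₂ ^ (d - l)) (B₁ ^ (d - (d - l))) := by
        rw [_root_.map_mul, hcc, Complex.conj_conj, pow_conjT_eq A₂ hA₂ hA₂d hld,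
          pow_conjT_eq B₁ hB₁ hB₁d hdld, haa]
      show (starRingEnd ℂ) (F l) = F (d - l)
      rw [hF]
      simp only []
      rw [map_add, map_add, map_add, e1, e2, e3, e4]
  -- part 2 : each summand has real part at most 2
  have hre : ∀ l ∈ Finset.Icc 1 (d - 1), (F l).re ≤ 2 := by
    intro l hl
    set C : Matrix (Fin n) (Fin n) ℂ :=
      a l • A₁ ^ l + (starRingEnd ℂ) (a l) • A₂ ^ l with hC
    set D : Matrix (Fin n) (Fin n) ℂ :=
      ((starRingEnd ℂ) (a l) * ω ^ l) • A₁ ^ l + a l • A₂ ^ l with hD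
    have hTl : F l = star ψ ⬝ᵥ ((C ⊗ₖ (B₁ ^ (d - l))) *ᵥ ψ)
        + star ψ ⬝ᵥ ((D ⊗ₖ (B₂ ^ (d - l))) *ᵥ ψ) := by
      rw [hF]
      simp only [hC, hD, hcv, Matrix.add_kronecker, Matrix.smul_kronecker,
        Matrix.add_mulVec, Matrix.smul_mulVec, dotProduct_add, dotProduct_smul,
        smul_eq_mul]
      ring
    rw [hTl]
    refine pair_bound C D (B₁ ^ (d - l)) (B₂ ^ (d - l))
      (conjT_mul_pow B₁ hB₁ (d - l)) (conjT_mul_pow B₂ hB₂ (d - l)) ?_ ψ hψ1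
    rw [hC, hD, hav, hωv]
    exact key_op (ac d l) (ωc d ^ l) (A₁ ^ l) (A₂ ^ l)
      (pow_mul_conjT A₁ hA₁ l) (pow_mul_conjT A₂ hA₂ l)
      (ωc_pow_mul_conj d l) (ac_mul_conj d l) (key_scalar d l hd0)
  refine ⟨Complex.conj_eq_iff_im.mp hconj, ?_⟩
  have hcard : (Finset.Icc 1 (d - 1)).card = d - 1 := by
    rw [Nat.card_Icc]; omega
  calc Itilde.re = ∑ l ∈ Finset.Icc 1 (d - 1), (F l).re := by
        rw [hIt, Complex.re_sum]
    _ ≤ ∑ _l ∈ Finset.Icc 1 (d - 1), (2 : ℝ) := Finset.sum_le_sum hre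
    _ = ((d - 1 : ℕ) : ℝ) * 2 := by
        rw [Finset.sum_const, hcard, nsmul_eq_mul]
    _ = 2 * ((d : ℝ) - 1) := by
        rw [Nat.cast_sub (by omega : 1 ≤ d)]
        push_cast
        ring
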